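/- For f(u,μ) = -μu + u³, v₁ = s·cos φ, v₂ = s·sin φ with s > 0 and 0 < φ < π/2, the pair (v₁,v₂) solves the reduced all-to-all system d(N-k)(v₂-v₁)+f(v₁,μ)=0, dk(v₁-v₂)+f(v₂,μ)=0 with v₁ ≠ v₂ if and only if d = s²(cos φ + sin φ)cos φ sin φ / (k cos φ + (N-k) sin φ) and μ = s²(k cos³φ + (N-k) sin³φ)/(k cos φ + (N-k) sin φ), provided φ ≠ π/4. -/

import Mathlib

open Real

/-- In polar coordinates `v₁ = s cos φ`, `v₂ = s sin φ` with `s > 0`, `0 < φ < π/2`,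
`φ ≠ π/4`, the reduced all-to-all system with `f(u,μ) = -μu + u³` is solved with
`v₁ ≠ v₂` if and only if `d` and `μ` are given by the explicit blow-up formulas. -/
theorem all_to_all_polar_solutions (N k : ℕ) (hN : 2 ≤ N) (hk1 : 1 ≤ k) (hk2 : k ≤ N / 2)
    (d μ s φ : ℝ) (hs : 0 < s) (hφ0 : 0 < φ) (hφ1 : φ < π / 2) (hφ4 : φ ≠ π / 4) :
    (d * ((N : ℝ) - k) * (s * sin φ - s * cos φ)
        + (-μ * (s * cos φ) + (s * cos φ) ^ 3) = 0 ∧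
      d * (k : ℝ) * (s * cos φ - s * sin φ)
        + (-μ * (s * sin φ) + (s * sin φ) ^ 3) = 0 ∧
      s * cos φ ≠ s * sin φ) ↔
    (d = s ^ 2 * (cos φ + sin φ) * cos φ * sin φ / ((k : ℝ) * cos φ + ((N : ℝ) - k) * sin φ) ∧
      μ = s ^ 2 * ((k : ℝ) * cos φ ^ 3 + ((N : ℝ) - k) * sin φ ^ 3)
            / ((k : ℝ) * cos φ + ((N : ℝ) - k) * sin φ)) := by
  have hπ : 0 < π := pi_pos
  have hc : 0 < cos φ := cos_pos_of_mem_Ioo ⟨by linarith, hφ1⟩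
  have hsin : 0 < sin φ := sin_pos_of_pos_of_lt_pi hφ0 (by linarith)
  have hkN : k < N := lt_of_le_of_lt hk2 (Nat.div_lt_self (by omega) one_lt_two)
  have hkNr : (k : ℝ) < (N : ℝ) := by exact_mod_cast hkN
  have hk1r : (1 : ℝ) ≤ (k : ℝ) := by exact_mod_cast hk1
  have hD : 0 < (k : ℝ) * cos φ + ((N : ℝ) - k) * sin φ := by
    have h1 : 0 < ((N : ℝ) - k) * sin φ := mul_pos (by linarith) hsin
    have h2 : 0 ≤ (k : ℝ) * cos φ := by positivity
    linarith
  have hne : cos φ ≠ sin φ := by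
    intro h
    apply hφ4
    have htan : tan φ = 1 := by
      rw [tan_eq_sin_div_cos, ← h, div_self hc.ne']
    exact injOn_tan ⟨by linarith, hφ1⟩ ⟨by linarith, by linarith⟩
      (by rw [htan, tan_pi_div_four])
  have hsc : sin φ - cos φ ≠ 0 := sub_ne_zero.mpr (Ne.symm hne)
  constructor
  · rintro ⟨h1, h2, -⟩
    have e1 : d * ((N : ℝ) - k) * (sin φ - cos φ) - μ * cos φ + s ^ 2 * cos φ ^ 3 = 0 := by
      apply mul_left_cancel₀ hs.ne'
      linear_combination h1
    have e2 : d * (k : ℝ) * (cos φ - sin φ) - μ * sin φ + s ^ 2 * sin φ ^ 3 = 0 := by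
      apply mul_left_cancel₀ hs.ne'
      linear_combination h2
    have hd2 : d * ((k : ℝ) * cos φ + ((N : ℝ) - k) * sin φ)
        = s ^ 2 * (cos φ + sin φ) * cos φ * sin φ := by
      apply mul_right_cancel₀ hsc
      linear_combination sin φ * e1 - cos φ * e2
    have hμ2 : μ * ((k : ℝ) * cos φ + ((N : ℝ) - k) * sin φ)
        = s ^ 2 * ((k : ℝ) * cos φ ^ 3 + ((N : ℝ) - k) * sin φ ^ 3) := by
      linear_combination (-(k : ℝ)) * e1 + (-(((N : ℝ) - k))) * e2
    exact ⟨by rw [eq_div_iff hD.ne']; linarith [hd2],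
      by rw [eq_div_iff hD.ne']; linarith [hμ2]⟩
  · rintro ⟨hd, hμ⟩
    subst hd hμ
    refine ⟨?_, ?_, ?_⟩
    · field_simp [show cos φ * (k : ℝ) + sin φ * ((N : ℝ) - k) ≠ 0 by linarith]
      ring
    · field_simp [show cos φ * (k : ℝ) + sin φ * ((N : ℝ) - k) ≠ 0 by linarith]
      ring
    · intro h
      exact hne (mul_left_cancel₀ hs.ne' h)
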